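/- Let l ≥ 0 and d ≥ 1. Let F₀ ∈ F₂[[z]] be the power series whose coefficient at z^m is 1 if and only if ν₂(m+1) ≥ l and ν₂(m+1) ≡ l (mod d), and let f ∈ F₂[[z]] be the power series whose coefficient at z^m is 1 if and only if ν₂(m+1) ≡ 0 (mod d). Then F₀ = z^{2^l − 1} · f^{2^l}. -/

import Mathlib

open PowerSeries Finset

lemma zmod2_mul_self (x : ZMod 2) : x * x = x := by revert x; decide

lemma coeff_sq (g : PowerSeries (ZMod 2)) (n : ℕ) :
    PowerSeries.coeff n (g ^ 2) =
      if 2 ∣ n then PowerSeries.coeff (n / 2) g else 0 := by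
  classical
  rw [sq, PowerSeries.coeff_mul]
  rw [← Finset.sum_filter_add_sum_filter_not (HasAntidiagonal.antidiagonal n)
      (fun p => p.1 = p.2)]
  have h2 : ∑ p ∈ (HasAntidiagonal.antidiagonal n).filter (fun p => ¬ p.1 = p.2),
      coeff p.1 g * coeff p.2 g = 0 := by
    apply Finset.sum_involution (g := fun p _ => (p.2, p.1))
    · intro a ha
      simp only [Finset.mem_filter] at ha
      rw [mul_comm]
      exact CharTwo.add_self_eq_zero _
    · intro a ha _
      simp only [Finset.mem_filter] at ha
      intro h
      exact ha.2 (congrArg Prod.snd h)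
    · intro a ha
      simp only [Finset.mem_filter, Finset.HasAntidiagonal.mem_antidiagonal] at ha ⊢
      omega
    · intro a ha; rfl
  rw [h2, add_zero]
  have h1 : (HasAntidiagonal.antidiagonal n).filter (fun p => p.1 = p.2) =
      if 2 ∣ n then {(n/2, n/2)} else ∅ := by
    ext p
    simp only [Finset.mem_filter, Finset.HasAntidiagonal.mem_antidiagonal]
    split <;> simp_all [Prod.ext_iff] <;> omega
  rw [h1]
  split <;> simp [zmod2_mul_self]

lemma val_two_mul_succ (k : ℕ) :
    padicValNat 2 (2 * (k + 1)) = 1 + padicValNat 2 (k + 1) := by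
  rw [padicValNat.mul (by norm_num) (Nat.succ_ne_zero k), padicValNat.self one_lt_two]

lemma key (l d : ℕ) (hd : 1 ≤ d) :
    (PowerSeries.mk fun m =>
      if l ≤ padicValNat 2 (m + 1) ∧ padicValNat 2 (m + 1) % d = l % d
      then (1 : ZMod 2) else 0)
    = PowerSeries.X ^ (2 ^ l - 1) *
      (PowerSeries.mk fun m =>
        if padicValNat 2 (m + 1) % d = 0 then (1 : ZMod 2) else 0) ^ 2 ^ l := by
  induction l with
  | zero =>
    simp only [pow_zero, pow_one, Nat.zero_le, true_and, Nat.zero_mod]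
    simp
  | succ l ih =>
    have hstep : (PowerSeries.mk fun m =>
        if l + 1 ≤ padicValNat 2 (m + 1) ∧ padicValNat 2 (m + 1) % d = (l + 1) % d
        then (1 : ZMod 2) else 0)
      = PowerSeries.X * (PowerSeries.mk fun m =>
        if l ≤ padicValNat 2 (m + 1) ∧ padicValNat 2 (m + 1) % d = l % d
        then (1 : ZMod 2) else 0) ^ 2 := by
      ext n
      cases n with
      | zero =>
        simp [padicValNat.one]
      | succ n =>
        rw [PowerSeries.coeff_succ_X_mul, coeff_sq, PowerSeries.coeff_mk]
        by_cases h2 : 2 ∣ n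
        · obtain ⟨k, rfl⟩ := h2
          rw [if_pos (dvd_mul_right 2 k), PowerSeries.coeff_mk]
          have hk : (2 * k) / 2 = k := by omega
          rw [hk]
          have hv : padicValNat 2 (2 * k + 1 + 1) = 1 + padicValNat 2 (k + 1) := by
            have : 2 * k + 1 + 1 = 2 * (k + 1) := by ring
            rw [this, val_two_mul_succ]
          rw [hv]
          congr 1
          have hmod : (1 + padicValNat 2 (k + 1)) % d = (l + 1) % d ↔
              padicValNat 2 (k + 1) % d = l % d := by
            constructor
            · intro h
              have h' : Nat.ModEq d (1 + padicValNat 2 (k + 1)) (1 + l) := by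
                show (1 + padicValNat 2 (k + 1)) % d = (1 + l) % d
                rw [Nat.add_comm 1 l]
                exact h
              exact Nat.ModEq.add_left_cancel' 1 h'
            · intro h
              have h' : Nat.ModEq d (padicValNat 2 (k + 1)) l := h
              have h2 := h'.add_left 1
              have : (1 + padicValNat 2 (k + 1)) % d = (1 + l) % d := h2
              rw [Nat.add_comm 1 l] at this
              exact this
          simp only [eq_iff_iff]
          constructor
          · rintro ⟨h1, h2⟩; exact ⟨by omega, hmod.mp h2⟩
          · rintro ⟨h1, h2⟩; exact ⟨by omega, hmod.mpr h2⟩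
        · rw [if_neg h2]
          have hodd : ¬ 2 ∣ (n + 1 + 1) := by omega
          have hv : padicValNat 2 (n + 1 + 1) = 0 :=
            padicValNat.eq_zero_of_not_dvd hodd
          rw [if_neg]
          rw [hv]
          omega
    rw [hstep, ih]
    rw [mul_pow, ← pow_mul, ← pow_mul]
    rw [← mul_assoc, ← pow_succ']
    have he : (2 ^ l - 1) * 2 = 2 ^ (l + 1) - 1 - 1 := by
      have : 1 ≤ 2 ^ l := Nat.one_le_two_pow
      have : 2 ^ (l + 1) = 2 * 2 ^ l := by ring
      omega
    have he2 : 2 ^ l * 2 = 2 ^ (l + 1) := by ring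
    rw [he, he2]
    congr 2
    have : 2 ^ 1 ≤ 2 ^ (l + 1) := Nat.pow_le_pow_right (by norm_num) (by omega)
    simp only [pow_one] at this
    omega

theorem stmt14 (l d : ℕ) (hd : 1 ≤ d)
    (F₀ f : PowerSeries (ZMod 2))
    (hF₀ : F₀ = PowerSeries.mk fun m =>
      if l ≤ padicValNat 2 (m + 1) ∧ padicValNat 2 (m + 1) % d = l % d
      then 1 else 0)
    (hf : f = PowerSeries.mk fun m =>
      if padicValNat 2 (m + 1) % d = 0 then 1 else 0) :
    F₀ = PowerSeries.X ^ (2 ^ l - 1) * f ^ 2 ^ l := by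
  subst hF₀ hf
  exact key l d hd
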